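/- Let G be a K_{r+1}-free graph (r ≥ 2) and f an ISTDF of G, with M = {v : f(v) = -1} and P = {v : f(v) = 1}. Then the number of edges between M and P satisfies |[M,P]| ≤ 2|E(G[M])| ≤ ((r-1)/r)·|M|², where G[M] is the subgraph induced by M. -/

import Mathlib

open SimpleGraph Finset

lemma turan_aux {V : Type*} [Fintype V] [DecidableEq V]
    (G : SimpleGraph V) [DecidableRel G.Adj] :
    ∀ r : ℕ, 1 ≤ r → ∀ S : Finset V,
      (∀ t : Finset V, t ⊆ S → ¬ G.IsNClique (r + 1) t) →
      (∑ v ∈ S, ((G.neighborFinset v ∩ S).card : ℚ)) ≤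
        (1 - 1 / (r : ℚ)) * (S.card : ℚ) ^ 2 := by
  intro r
  induction r with
  | zero => omega
  | succ k ih =>
    intro _ S hS
    rcases Nat.eq_zero_or_pos k with hk0 | hk1
    · -- base case r = 1 : no edges inside S
      subst hk0
      have hempty : ∀ v ∈ S, G.neighborFinset v ∩ S = ∅ := by
        intro v hv
        rw [Finset.eq_empty_iff_forall_notMem]
        intro u hu
        rw [Finset.mem_inter, SimpleGraph.mem_neighborFinset] at hu
        have hclique : G.IsNClique 2 {u, v} := by
          have h1 : G.IsNClique 1 {v} := by simp
          exact h1.insert (by simpa using hu.1.symm)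
        exact hS {u, v} (by
          intro x hx
          simp only [Finset.mem_insert, Finset.mem_singleton] at hx
          rcases hx with rfl | rfl
          · exact hu.2
          · exact hv) hclique
      have : (∑ v ∈ S, ((G.neighborFinset v ∩ S).card : ℚ)) = 0 := by
        apply Finset.sum_eq_zero
        intro v hv
        rw [hempty v hv]; simp
      rw [this]
      positivity
    · -- inductive step
      rcases S.eq_empty_or_nonempty with rfl | hSne
      · simp
      obtain ⟨v, hvS, hvmax⟩ := S.exists_max_image
        (fun u => (G.neighborFinset u ∩ S).card) hSne
      set N : Finset V := G.neighborFinset v ∩ S with hN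
      have hNsub : N ⊆ S := Finset.inter_subset_right
      set Δ : ℕ := N.card with hΔ
      set n : ℕ := S.card with hn
      have hΔn : Δ ≤ n := Finset.card_le_card hNsub
      -- cliques inside N would extend to cliques in S via v
      have hNfree : ∀ t : Finset V, t ⊆ N → ¬ G.IsNClique (k + 1) t := by
        intro t ht hcl
        have hvadj : ∀ b ∈ t, G.Adj v b := by
          intro b hb
          have := ht hb
          rw [hN, Finset.mem_inter, SimpleGraph.mem_neighborFinset] at this
          exact this.1
        have hbig := hcl.insert hvadj
        refine hS (insert v t) ?_ hbig
        intro x hx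
        rcases Finset.mem_insert.mp hx with rfl | hx
        · exact hvS
        · exact hNsub (ht hx)
      have hIH := ih hk1 N hNfree
      -- bound the degree of each u ∈ N
      have hdegN : ∀ u ∈ N, ((G.neighborFinset u ∩ S).card : ℚ) ≤
          ((G.neighborFinset u ∩ N).card : ℚ) + ((n : ℚ) - Δ) := by
        intro u hu
        have hsub : G.neighborFinset u ∩ S ⊆ (G.neighborFinset u ∩ N) ∪ (S \ N) := by
          intro x hx
          rw [Finset.mem_inter] at hx
          by_cases hxN : x ∈ N
          · exact Finset.mem_union_left _ (Finset.mem_inter.mpr ⟨hx.1, hxN⟩)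
          · exact Finset.mem_union_right _ (Finset.mem_sdiff.mpr ⟨hx.2, hxN⟩)
        have h1 : (G.neighborFinset u ∩ S).card ≤
            (G.neighborFinset u ∩ N).card + (S \ N).card :=
          le_trans (Finset.card_le_card hsub) (Finset.card_union_le _ _)
        have h2 : (S \ N).card = n - Δ := Finset.card_sdiff_of_subset hNsub
        have : (G.neighborFinset u ∩ S).card ≤
            (G.neighborFinset u ∩ N).card + (n - Δ) := by rw [← h2]; exact h1
        calc ((G.neighborFinset u ∩ S).card : ℚ)
            ≤ (((G.neighborFinset u ∩ N).card + (n - Δ) : ℕ) : ℚ) := by exact_mod_cast this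
          _ = ((G.neighborFinset u ∩ N).card : ℚ) + ((n : ℚ) - Δ) := by
              push_cast [Nat.cast_sub hΔn]; ring
      have hdegmax : ∀ u ∈ S, ((G.neighborFinset u ∩ S).card : ℚ) ≤ (Δ : ℚ) := by
        intro u hu
        exact_mod_cast hvmax u hu
      -- split the sum
      have hsplit : (∑ u ∈ S, ((G.neighborFinset u ∩ S).card : ℚ)) =
          (∑ u ∈ N, ((G.neighborFinset u ∩ S).card : ℚ)) +
          (∑ u ∈ S \ N, ((G.neighborFinset u ∩ S).card : ℚ)) :=
        by rw [← Finset.sum_sdiff hNsub, add_comm]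
      have hb1 : (∑ u ∈ N, ((G.neighborFinset u ∩ S).card : ℚ)) ≤
          (1 - 1 / (k : ℚ)) * (Δ : ℚ) ^ 2 + (Δ : ℚ) * ((n : ℚ) - Δ) := by
        calc (∑ u ∈ N, ((G.neighborFinset u ∩ S).card : ℚ))
            ≤ ∑ u ∈ N, (((G.neighborFinset u ∩ N).card : ℚ) + ((n : ℚ) - Δ)) :=
              Finset.sum_le_sum hdegN
          _ = (∑ u ∈ N, ((G.neighborFinset u ∩ N).card : ℚ)) + (Δ : ℚ) * ((n : ℚ) - Δ) := by
              rw [Finset.sum_add_distrib, Finset.sum_const, nsmul_eq_mul]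
          _ ≤ (1 - 1 / (k : ℚ)) * (Δ : ℚ) ^ 2 + (Δ : ℚ) * ((n : ℚ) - Δ) := by
              exact add_le_add hIH le_rfl
      have hb2 : (∑ u ∈ S \ N, ((G.neighborFinset u ∩ S).card : ℚ)) ≤
          ((n : ℚ) - Δ) * Δ := by
        calc (∑ u ∈ S \ N, ((G.neighborFinset u ∩ S).card : ℚ))
            ≤ ∑ _u ∈ S \ N, (Δ : ℚ) :=
              Finset.sum_le_sum fun u hu => hdegmax u (Finset.mem_sdiff.mp hu).1
          _ = ((S \ N).card : ℚ) * Δ := by rw [Finset.sum_const, nsmul_eq_mul]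
          _ = ((n : ℚ) - Δ) * Δ := by
              rw [Finset.card_sdiff_of_subset hNsub, Nat.cast_sub hΔn]
      -- algebra
      have hkq : (1 : ℚ) ≤ (k : ℚ) := by exact_mod_cast hk1
      have halg : (1 - 1 / (k : ℚ)) * (Δ : ℚ) ^ 2 + (Δ : ℚ) * ((n : ℚ) - Δ) +
          ((n : ℚ) - Δ) * Δ ≤ (1 - 1 / ((k : ℚ) + 1)) * (n : ℚ) ^ 2 := by
        have hk0 : (0 : ℚ) < (k : ℚ) := by linarith
        have hk1' : (0 : ℚ) < (k : ℚ) + 1 := by linarith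
        rw [← sub_nonneg]
        have expand : (1 - 1 / ((k : ℚ) + 1)) * (n : ℚ) ^ 2 -
            ((1 - 1 / (k : ℚ)) * (Δ : ℚ) ^ 2 + (Δ : ℚ) * ((n : ℚ) - Δ) + ((n : ℚ) - Δ) * Δ) =
            (((k : ℚ) + 1) * Δ - (k : ℚ) * n) ^ 2 / ((k : ℚ) * ((k : ℚ) + 1)) := by
          field_simp
          ring
        rw [expand]
        positivity
      calc (∑ u ∈ S, ((G.neighborFinset u ∩ S).card : ℚ))
          = (∑ u ∈ N, ((G.neighborFinset u ∩ S).card : ℚ)) +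
            (∑ u ∈ S \ N, ((G.neighborFinset u ∩ S).card : ℚ)) := hsplit
        _ ≤ (1 - 1 / (k : ℚ)) * (Δ : ℚ) ^ 2 + (Δ : ℚ) * ((n : ℚ) - Δ) +
            ((n : ℚ) - Δ) * Δ := add_le_add hb1 hb2
        _ ≤ (1 - 1 / ((k : ℚ) + 1)) * (n : ℚ) ^ 2 := halg
        _ = (1 - 1 / ((k + 1 : ℕ) : ℚ)) * ((S.card : ℚ)) ^ 2 := by push_cast; ring

/-- Let `G` be `K_{r+1}`-free (`r ≥ 2`) and `f` an ISTDF of `G`, with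
`M = {v : f v = -1}` and `P = {v : f v = 1}`. Then
`|[M,P]| ≤ 2|E(G[M])| ≤ ((r-1)/r)·|M|²`, where `|[M,P]| = ∑_{v∈M} |N(v) ∩ P|`
and `2|E(G[M])| = ∑_{v∈M} |N(v) ∩ M|`. -/
theorem istdf_edges_between_bound {V : Type*} [Fintype V] [DecidableEq V]
    (G : SimpleGraph V) [DecidableRel G.Adj] (r : ℕ) (hr : 2 ≤ r)
    (hfree : G.CliqueFree (r + 1))
    (f : V → ℤ) (hf1 : ∀ v, f v = 1 ∨ f v = -1)
    (hf2 : ∀ v, ∑ u ∈ G.neighborFinset v, f u ≤ 0)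
    (M P : Finset V) (hM : M = Finset.univ.filter (fun v => f v = -1))
    (hP : P = Finset.univ.filter (fun v => f v = 1)) :
    (∑ v ∈ M, (G.neighborFinset v ∩ P).card) ≤
        (∑ v ∈ M, (G.neighborFinset v ∩ M).card) ∧
      ((∑ v ∈ M, (G.neighborFinset v ∩ M).card : ℚ)) ≤
        (((r : ℚ) - 1) / r) * (M.card : ℚ) ^ 2 := by
  constructor
  · -- first inequality: vertexwise
    apply Finset.sum_le_sum
    intro v _
    have hsplit : G.neighborFinset v = (G.neighborFinset v ∩ P) ∪ (G.neighborFinset v ∩ M) := by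
      ext u
      simp only [Finset.mem_union, Finset.mem_inter, hM, hP, Finset.mem_filter,
        Finset.mem_univ, true_and]
      rcases hf1 u with h | h <;> simp [h] <;> tauto
    have hdisj : Disjoint (G.neighborFinset v ∩ P) (G.neighborFinset v ∩ M) := by
      rw [Finset.disjoint_left]
      intro u hu1 hu2
      rw [Finset.mem_inter, hP, Finset.mem_filter] at hu1
      rw [Finset.mem_inter, hM, Finset.mem_filter] at hu2
      rw [hu1.2.2] at hu2
      norm_num at hu2
    have hsum := hf2 v
    rw [hsplit, Finset.sum_union hdisj] at hsum
    have hP' : ∀ u ∈ G.neighborFinset v ∩ P, f u = 1 := by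
      intro u hu
      rw [Finset.mem_inter, hP, Finset.mem_filter] at hu
      exact hu.2.2
    have hM' : ∀ u ∈ G.neighborFinset v ∩ M, f u = (-1 : ℤ) := by
      intro u hu
      rw [Finset.mem_inter, hM, Finset.mem_filter] at hu
      exact hu.2.2
    have hsumP : (∑ u ∈ G.neighborFinset v ∩ P, f u) = (G.neighborFinset v ∩ P).card := by
      rw [Finset.sum_congr rfl hP', Finset.sum_const, nsmul_eq_mul, mul_one]
    have hsumM : (∑ u ∈ G.neighborFinset v ∩ M, f u) = -((G.neighborFinset v ∩ M).card : ℤ) := by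
      rw [Finset.sum_congr rfl hM', Finset.sum_const, nsmul_eq_mul]
      ring
    rw [hsumP, hsumM] at hsum
    exact_mod_cast by linarith
  · -- second inequality: Turán bound on M
    have hr1 : 1 ≤ r := by omega
    have hfreeM : ∀ t : Finset V, t ⊆ M → ¬ G.IsNClique (r + 1) t := fun t _ => hfree t
    have h := turan_aux G r hr1 M hfreeM
    have hrq : (0 : ℚ) < (r : ℚ) := by exact_mod_cast by omega
    have heq : (1 - 1 / (r : ℚ)) = ((r : ℚ) - 1) / r := by field_simp
    rw [heq] at h
    calc ((∑ v ∈ M, (G.neighborFinset v ∩ M).card : ℚ))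
        = ∑ v ∈ M, ((G.neighborFinset v ∩ M).card : ℚ) := by push_cast; ring
      _ ≤ (((r : ℚ) - 1) / r) * (M.card : ℚ) ^ 2 := h
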